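/- If λ ∈ ℝ^n has all entries strictly positive, then for any distinct indices i ≠ j and 1 ≤ l < n: S_{n-2;ij}(λ) · S_l(λ) − S_n(λ) · S_{l-2;ij}(λ) > 0, where S_{m;ij} denotes S_m with λ_i and λ_j both set to 0 (and S_m := 0 for m < 0, S_0 := 1). -/

import Mathlib

open Finset

/-- `S m lam` : the `m`-th elementary symmetric function of the entries of `lam`,
with the conventions `S 0 = 1` and `S m = 0` for `m < 0` (and for `m > n`). -/
noncomputable def S {n : ℕ} (m : ℤ) (lam : Fin n → ℝ) : ℝ :=
  if 0 ≤ m then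
    ∑ A ∈ Finset.powersetCard m.toNat (Finset.univ : Finset (Fin n)), ∏ j ∈ A, lam j
  else 0

noncomputable def es {n : ℕ} (s : Finset (Fin n)) (m : ℕ) (f : Fin n → ℝ) : ℝ :=
  ∑ A ∈ s.powersetCard m, ∏ k ∈ A, f k

lemma es_nonneg {n : ℕ} {s : Finset (Fin n)} {m : ℕ} {f : Fin n → ℝ}
    (hf : ∀ k, 0 ≤ f k) : 0 ≤ es s m f :=
  Finset.sum_nonneg fun A _ => Finset.prod_nonneg fun k _ => hf k

lemma es_pos {n : ℕ} {s : Finset (Fin n)} {m : ℕ} {f : Fin n → ℝ}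
    (hf : ∀ k, 0 < f k) (hm : m ≤ s.card) : 0 < es s m f :=
  Finset.sum_pos (fun A _ => Finset.prod_pos fun k _ => hf k)
    (Finset.powersetCard_nonempty.2 hm)

lemma es_insert {n : ℕ} {s : Finset (Fin n)} {x : Fin n} (hx : x ∉ s) (m : ℕ) (f : Fin n → ℝ) :
    es (insert x s) (m + 1) f = es s (m + 1) f + f x * es s m f := by
  unfold es
  rw [Finset.powersetCard_succ_insert hx, Finset.sum_union, Finset.sum_image, Finset.mul_sum]
  · congr 1
    refine Finset.sum_congr rfl fun A hA => ?_
    rw [Finset.mem_powersetCard] at hA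
    rw [Finset.prod_insert (fun h => hx (hA.1 h))]
  · intro A hA B hB h
    rw [Finset.mem_coe, Finset.mem_powersetCard] at hA hB
    have hxA : x ∉ A := fun h' => hx (hA.1 h')
    have hxB : x ∉ B := fun h' => hx (hB.1 h')
    have := congrArg (fun t => Finset.erase t x) h
    simpa [Finset.erase_insert hxA, Finset.erase_insert hxB] using this
  · rw [Finset.disjoint_left]
    intro u hu hu'
    rw [Finset.mem_powersetCard] at hu
    obtain ⟨A, hA, rfl⟩ := Finset.mem_image.1 hu'
    exact hx (hu.1 (Finset.mem_insert_self x A))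

theorem stmt4 (n : ℕ) (hn : 2 ≤ n) (lam : Fin n → ℝ) (hpos : ∀ i, 0 < lam i)
    (i j : Fin n) (hij : i ≠ j) (l : ℤ) (hl1 : 1 ≤ l) (hln : l < n) :
    0 < S ((n : ℤ) - 2) (Function.update (Function.update lam i 0) j 0) * S l lam
        - S (n : ℤ) lam * S (l - 2) (Function.update (Function.update lam i 0) j 0) := by
  set μ := Function.update (Function.update lam i 0) j 0 with hμ
  have hμi : μ i = 0 := by
    simp [hμ, Function.update_of_ne hij]
  have hμj : μ j = 0 := by simp [hμ]
  have hμk : ∀ k, k ≠ i → k ≠ j → μ k = lam k := fun k hki hkj => by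
    simp [hμ, Function.update_of_ne hkj, Function.update_of_ne hki]
  set T : Finset (Fin n) := Finset.univ \ {i, j} with hT
  have hiT : i ∉ T := by simp [hT]
  have hjT : j ∉ T := by simp [hT]
  have hijT : i ∉ insert j T := by simp [hiT, hij]
  have hU : (Finset.univ : Finset (Fin n)) = insert i (insert j T) := by
    ext k
    by_cases hki : k = i <;> by_cases hkj : k = j <;> simp [hT, hki, hkj]
  have hcardT : T.card = n - 2 := by
    rw [hT, Finset.card_sdiff_of_subset (Finset.subset_univ _), Finset.card_pair hij, Finset.card_univ,
      Fintype.card_fin]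
  -- key : S-sums of μ equal es over T of lam
  have key : ∀ m : ℕ,
      (∑ A ∈ Finset.powersetCard m (Finset.univ : Finset (Fin n)), ∏ k ∈ A, μ k)
        = es T m lam := by
    intro m
    rw [es, ← Finset.sum_subset (Finset.powersetCard_mono (Finset.subset_univ T))]
    · refine Finset.sum_congr rfl fun A hA => ?_
      rw [Finset.mem_powersetCard] at hA
      refine Finset.prod_congr rfl fun k hk => ?_
      have := hA.1 hk
      rw [hT, Finset.mem_sdiff, Finset.mem_insert, Finset.mem_singleton] at this
      exact hμk k (fun h => this.2 (Or.inl h)) (fun h => this.2 (Or.inr h))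
    · intro A hA hA'
      rw [Finset.mem_powersetCard] at hA hA'
      have : ¬ A ⊆ T := fun h => hA' ⟨h, hA.2⟩
      obtain ⟨k, hkA, hkT⟩ := Finset.not_subset.1 this
      rw [hT, Finset.mem_sdiff, Finset.mem_insert, Finset.mem_singleton] at hkT
      push_neg at hkT
      have hk0 : μ k = 0 := by
        rcases hkT (Finset.mem_univ k) with h | h
        · rw [h, hμi]
        · rw [h, hμj]
      exact Finset.prod_eq_zero hkA hk0
  have hP : 0 < ∏ k ∈ T, lam k := Finset.prod_pos fun k _ => hpos k
  set P := ∏ k ∈ T, lam k with hPdef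
  -- S (n-2) μ = P
  have hSn2 : S ((n : ℤ) - 2) μ = P := by
    rw [S, if_pos (by omega : (0:ℤ) ≤ (n:ℤ) - 2)]
    have h2 : ((n : ℤ) - 2).toNat = n - 2 := by omega
    rw [h2, key (n - 2), es, ← hcardT, Finset.powersetCard_self, Finset.sum_singleton]
  -- S n lam = lam i * lam j * P
  have hSn : S (n : ℤ) lam = lam i * (lam j * P) := by
    rw [S, if_pos (by positivity : (0:ℤ) ≤ (n:ℤ)), Int.toNat_natCast]
    have hcu : (Finset.univ : Finset (Fin n)).card = n := by
      rw [Finset.card_univ, Fintype.card_fin]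
    have hps := Finset.powersetCard_self (Finset.univ : Finset (Fin n))
    rw [hcu] at hps
    rw [hps, Finset.sum_singleton, hU,
      Finset.prod_insert hijT, Finset.prod_insert hjT]
  by_cases hl2 : 2 ≤ l
  · -- l = 2 + k
    obtain ⟨k, rfl⟩ := Int.le.dest hl2
    have hkcard : k + 1 ≤ T.card := by
      rw [hcardT]; omega
    have hSl : S (2 + (k : ℤ)) lam = es Finset.univ (k + 2) lam := by
      rw [S, if_pos (by omega)]
      have : (2 + (k : ℤ)).toNat = k + 2 := by omega
      rw [this, es]
    have hSl2 : S (2 + (k : ℤ) - 2) μ = es T k lam := by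
      rw [S, if_pos (by omega)]
      have : (2 + (k : ℤ) - 2).toNat = k := by omega
      rw [this, key k]
    have hexp : es Finset.univ (k + 2) lam
        = es T (k + 2) lam + lam j * es T (k + 1) lam
          + lam i * (es T (k + 1) lam + lam j * es T k lam) := by
      rw [hU, es_insert hijT (k + 1) lam, es_insert hjT (k + 1) lam, es_insert hjT k lam]
    have h1 : 0 < es T (k + 1) lam := es_pos hpos hkcard
    have h2 : 0 ≤ es T (k + 2) lam := es_nonneg fun k => (hpos k).le
    have h3 : 0 ≤ es T k lam := es_nonneg fun k => (hpos k).le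
    rw [hSn2, hSn, hSl, hSl2, hexp]
    have hli := hpos i
    have hlj := hpos j
    nlinarith [mul_nonneg hP.le h2, mul_pos (mul_pos hP hli) h1, mul_pos (mul_pos hP hlj) h1]
  · -- l = 1
    have hl : l = 1 := by omega
    subst hl
    have hS0 : S (1 - 2) μ = 0 := by
      rw [S, if_neg (by norm_num)]
    have hS1 : 0 < S (1 : ℤ) lam := by
      rw [S, if_pos (by norm_num)]
      have : ((1:ℤ)).toNat = 1 := rfl
      rw [this]
      refine es_pos hpos ?_
      rw [Finset.card_univ, Fintype.card_fin]; omega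
    rw [hSn2, hS0, mul_zero, sub_zero]
    exact mul_pos hP hS1
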